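/- Let C be a closed convex set in a finite-dimensional Euclidean space and let S be a nonempty subset of C. Then the relative interior of conv(S) and the relative interior of face(S;C), the minimal face of C containing S, have a point in common: relint(conv S) ∩ relint(face(S;C)) ≠ ∅. -/

import Mathlib

/- Common definitions following "Facially Dual Complete (Nice) cones and
lexicographic tangents" by V. Roshchina and L. Tunçel. -/

open Set Filter
open scoped Pointwise

local notation "⟪" x ", " y "⟫" => @inner ℝ _ _ x y

variable {E : Type*} [NormedAddCommGroup E] [InnerProductSpace ℝ E]

/-- The tangent cone to a set `C` at `x`: the closure of the cone of feasible
directions `{d : x + ε • d ∈ C for some ε > 0}`. -/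
def TangCone (x : E) (C : Set E) : Set E :=
  closure {d : E | ∃ ε : ℝ, 0 < ε ∧ x + ε • d ∈ C}

/-- `F` is a face of the convex set `C`: a closed convex subset such that any open
segment of `C` whose interior meets `F` has both endpoints in `F`. -/
def IsFaceOf (F C : Set E) : Prop :=
  F ⊆ C ∧ Convex ℝ F ∧ IsClosed F ∧
    ∀ x ∈ F, ∀ y ∈ C, ∀ z ∈ C, x ∈ openSegment ℝ y z → y ∈ F ∧ z ∈ F

/-- A proper face: a nonempty face different from the whole set. -/
def IsProperFaceOf (F C : Set E) : Prop := IsFaceOf F C ∧ F.Nonempty ∧ F ≠ C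

/-- The dual cone `K* = {s : ⟨s,x⟩ ≥ 0 for all x ∈ K}`. -/
def DualCone' (K : Set E) : Set E := {s : E | ∀ x ∈ K, 0 ≤ ⟪s, x⟫}

/-- `F^⊥ = {s : ⟨s,x⟩ = 0 for all x ∈ F}`. -/
def PerpOf (F : Set E) : Set E := {s : E | ∀ x ∈ F, ⟪s, x⟫ = 0}

/-- Facial dual completeness: `K* + F^⊥` is closed for every proper face `F` of `K`. -/
def IsFDC (K : Set E) : Prop :=
  ∀ F : Set E, IsProperFaceOf F K → IsClosed (DualCone' K + PerpOf F)

/-- Tangential exposure: `T(x;C) ∩ span F = T(x;F)` for every proper face `F` and `x ∈ F`. -/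
def TangentiallyExposed (C : Set E) : Prop :=
  ∀ F : Set E, IsProperFaceOf F C → ∀ x ∈ F,
    TangCone x C ∩ (Submodule.span ℝ F : Set E) = TangCone x F

/-- The family of all tangent cones of members of a family of sets. -/
def TangFamily (𝒦 : Set (Set E)) : Set (Set E) :=
  {T | ∃ C ∈ 𝒦, ∃ x ∈ C, T = TangCone x C}

/-- `𝒯^k(C)`: the `k`-fold iterated tangent-cone families of `C`;
its members are the lexicographic tangent cones (of order `k`) of `C`. -/
def TangIter (C : Set E) : ℕ → Set (Set E)
  | 0 => {C}
  | k + 1 => TangFamily (TangIter C k)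

/-- Strong tangential exposure: `C` and all of its lexicographic tangent cones are
tangentially exposed. -/
def StronglyTangentiallyExposed (C : Set E) : Prop :=
  ∀ k : ℕ, ∀ T ∈ TangIter C k, TangentiallyExposed T

/-- `F` is an exposed face of `C`: the set of maximizers over `C` of some linear functional. -/
def IsExposedFaceOf (F C : Set E) : Prop :=
  ∃ p : E, F = {x ∈ C | ∀ y ∈ C, ⟪p, y⟫ ≤ ⟪p, x⟫}

/-- `C` is facially exposed: every proper face of `C` is exposed. -/
def FaciallyExposed (C : Set E) : Prop :=
  ∀ F : Set E, IsProperFaceOf F C → IsExposedFaceOf F C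

/-- The normal cone to `C` at `x`. -/
def NormalCone' (x : E) (C : Set E) : Set E := {s : E | ∀ y ∈ C, ⟪s, y - x⟫ ≤ 0}

/-- The minimal face of `C` containing `S`. -/
def MinimalFace (S C : Set E) : Set E := ⋂₀ {F : Set E | IsFaceOf F C ∧ S ⊆ F}

/-- `K` is a cone: closed under positive scalar multiplication. -/
def IsConeSet (K : Set E) : Prop := ∀ c : ℝ, 0 < c → ∀ x ∈ K, c • x ∈ K

-- auxiliary lemmas
section Helpers
variable {E : Type*} [NormedAddCommGroup E] [NormedSpace ℝ E] {A : Set E} {x : E}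



theorem mem_intrinsicInterior_iff_ball :
    x ∈ intrinsicInterior ℝ A ↔ x ∈ A ∧ ∃ δ > 0, ∀ z ∈ (affineSpan ℝ A : Set E),
      dist z x < δ → z ∈ A := by
  rw [mem_intrinsicInterior]
  constructor
  · rintro ⟨y, hy, rfl⟩
    have hyA : (y : E) ∈ A := interior_subset (s := (Subtype.val ⁻¹' A : Set (affineSpan ℝ A))) hy
    refine ⟨hyA, ?_⟩
    rw [mem_interior_iff_mem_nhds, Metric.mem_nhds_iff] at hy
    obtain ⟨δ, hδ, hball⟩ := hy
    refine ⟨δ, hδ, fun z hz hdist => ?_⟩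
    have : (⟨z, hz⟩ : affineSpan ℝ A) ∈ Metric.ball y δ := by
      simpa [Metric.mem_ball, Subtype.dist_eq] using hdist
    exact hball this
  · rintro ⟨hxA, δ, hδ, h⟩
    have hx : x ∈ affineSpan ℝ A := subset_affineSpan ℝ A hxA
    refine ⟨⟨x, hx⟩, ?_, rfl⟩
    rw [mem_interior_iff_mem_nhds, Metric.mem_nhds_iff]
    refine ⟨δ, hδ, fun z hz => ?_⟩
    exact h z z.2 (by simpa [Metric.mem_ball, Subtype.dist_eq] using hz)

/-- From a relative interior point, the segment to any point of the affine span can be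
extended slightly beyond `x` while staying in `A`. -/
theorem exists_extend_mem (hx : x ∈ intrinsicInterior ℝ A) {y : E}
    (hy : y ∈ affineSpan ℝ A) : ∃ ε : ℝ, 0 < ε ∧ x + ε • (x - y) ∈ A := by
  obtain ⟨hxA, δ, hδ, h⟩ := mem_intrinsicInterior_iff_ball.1 hx
  have hxs : x ∈ affineSpan ℝ A := subset_affineSpan ℝ A hxA
  set ε : ℝ := δ / (2 * (‖x - y‖ + 1)) with hε
  have hpos : 0 < ε := by positivity
  refine ⟨ε, hpos, h _ ?_ ?_⟩
  · have hd : x - y ∈ (affineSpan ℝ A).direction :=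
      AffineSubspace.vsub_mem_direction hxs hy
    have : ε • (x - y) +ᵥ x ∈ affineSpan ℝ A :=
      AffineSubspace.vadd_mem_of_mem_direction (Submodule.smul_mem _ _ hd) hxs
    simpa [vadd_eq_add, add_comm] using this
  · have : dist (x + ε • (x - y)) x = ε * ‖x - y‖ := by
      rw [dist_eq_norm]
      simp [norm_smul, abs_of_pos hpos]
    rw [this, hε]
    rw [div_mul_eq_mul_div, div_lt_iff₀ (by positivity)]
    nlinarith [norm_nonneg (x - y)]

theorem interval_mem {A : Set E} (hA : Convex ℝ A) {x e : E} {α β s : ℝ}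
    (hα : α ≤ s) (hβ : s ≤ β) (h1 : x + α • e ∈ A) (h2 : x + β • e ∈ A) :
    x + s • e ∈ A := by
  rcases eq_or_lt_of_le (hα.trans hβ) with h | h
  · obtain rfl : α = s := le_antisymm hα (by linarith)
    exact h1
  · have hba : (0:ℝ) < β - α := by linarith
    have hne : β - α ≠ 0 := ne_of_gt hba
    have ht : 0 ≤ (β - s) / (β - α) := by apply div_nonneg <;> linarith
    have ht' : 0 ≤ (s - α) / (β - α) := by apply div_nonneg <;> linarith
    have hsum : (β - s) / (β - α) + (s - α) / (β - α) = 1 := by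
      field_simp
      ring
    have := hA h1 h2 ht ht' hsum
    convert this using 1
    match_scalars <;> field_simp <;> ring

theorem mem_intrinsicInterior_of_core [FiniteDimensional ℝ E]
    (hA : Convex ℝ A) (hxA : x ∈ A)
    (hcore : ∀ y ∈ A, ∃ ε : ℝ, 0 < ε ∧ x + ε • (x - y) ∈ A) :
    x ∈ intrinsicInterior ℝ A := by
  rw [mem_intrinsicInterior_iff_ball]
  refine ⟨hxA, ?_⟩
  have hVs : vectorSpan ℝ A = Submodule.span ℝ ((· -ᵥ x) '' A) :=
    vectorSpan_eq_span_vsub_set_right ℝ hxA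
  obtain ⟨b, hbsub, hbspan, hbli⟩ := exists_linearIndependent ℝ ((· -ᵥ x) '' A)
  have hbfin : b.Finite := hbli.setFinite
  haveI : Fintype b := hbfin.fintype
  have hspan2 : Submodule.span ℝ (Set.range ((↑) : b → E)) = vectorSpan ℝ A := by
    rw [Subtype.range_coe, hbspan, hVs]
  -- membership of z - x in span of b
  have hmem : ∀ z ∈ (affineSpan ℝ A : Set E),
      z - x ∈ Submodule.span ℝ (Set.range ((↑) : b → E)) := by
    intro z hz
    rw [hspan2, ← direction_affineSpan]
    exact AffineSubspace.vsub_mem_direction hz (subset_affineSpan ℝ A hxA)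
  rcases isEmpty_or_nonempty b with hb | hb
  · refine ⟨1, one_pos, fun z hz _ => ?_⟩
    have h0 := hmem z hz
    rw [Set.range_eq_empty, Submodule.span_empty, Submodule.mem_bot, sub_eq_zero] at h0
    rwa [h0]
  · -- data for each basis element
    have hy : ∀ e : b, ∃ y ∈ A, y - x = (e : E) := by
      intro e
      obtain ⟨y, hyA, hye⟩ := hbsub e.2
      exact ⟨y, hyA, hye⟩
    choose y hyA hyx using hy
    choose ε hεpos hεmem using fun e : b => hcore (y e) (hyA e)
    -- coordinate functionals
    let g : b → (Submodule.span ℝ (Set.range ((↑) : b → E)) →L[ℝ] ℝ) := fun e =>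
      LinearMap.toContinuousLinearMap
        ((Finsupp.lapply e).comp hbli.repr)
    set n : ℝ := (Fintype.card b : ℝ) with hn
    have hnpos : 0 < n := by
      rw [hn]
      exact_mod_cast Fintype.card_pos
    set m : b → ℝ := fun e => min (ε e) 1 with hm
    have hmpos : ∀ e, 0 < m e := fun e => lt_min (hεpos e) one_pos
    set K : b → ℝ := fun e => ‖g e‖ + 1 with hK
    have hKpos : ∀ e, 0 < K e := fun e => by positivity
    obtain ⟨δ, hδpos, hδle⟩ : ∃ δ > 0, ∀ e : b, δ ≤ m e / (n * K e) := by
      refine ⟨Finset.univ.inf' (Finset.univ_nonempty) (fun e => m e / (n * K e)), ?_, ?_⟩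
      · apply (Finset.lt_inf'_iff _).2
        intro e _
        have := hmpos e; have := hKpos e
        positivity
      · intro e
        exact Finset.inf'_le _ (Finset.mem_univ e)
    refine ⟨δ, hδpos, fun z hz hdist => ?_⟩
    have hv := hmem z hz
    set c : b →₀ ℝ := hbli.repr ⟨z - x, hv⟩ with hc
    have hrepr : ∑ e : b, c e • (e : E) = z - x := by
      have := hbli.linearCombination_repr ⟨z - x, hv⟩
      rw [Finsupp.linearCombination_apply, Finsupp.sum_fintype] at this
      · exact this
      · intro e; simp
    -- bound on coordinates
    have hcbound : ∀ e : b, |n * c e| ≤ m e := by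
      intro e
      have h1 : |c e| ≤ ‖g e‖ * ‖z - x‖ := by
        have := (g e).le_opNorm ⟨z - x, hv⟩
        have hval : g e ⟨z - x, hv⟩ = c e := rfl
        rw [hval] at this
        simpa [Real.norm_eq_abs] using this
      have h2 : ‖z - x‖ < δ := by rwa [← dist_eq_norm]
      have h3 : δ ≤ m e / (n * K e) := hδle e
      have h4 : ‖g e‖ * ‖z - x‖ ≤ (K e) * (m e / (n * K e)) := by
        apply mul_le_mul
        · exact le_add_of_nonneg_right zero_le_one
        · exact le_of_lt (lt_of_lt_of_le h2 h3)
        · exact norm_nonneg _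
        · exact le_of_lt (hKpos e)
      have h5 : (K e) * (m e / (n * K e)) = m e / n := by
        rw [mul_comm n, ← mul_div_assoc, mul_div_mul_left _ _ (ne_of_gt (hKpos e))]
      rw [abs_mul, abs_of_pos hnpos]
      have := h1.trans (h4.trans_eq h5)
      calc n * |c e| ≤ n * (m e / n) := by
            apply mul_le_mul_of_nonneg_left this (le_of_lt hnpos)
        _ = m e := by field_simp
    -- each point x + (n * c e) • e lies in A
    have hpt : ∀ e : b, x + (n * c e) • (e : E) ∈ A := by
      intro e
      have habs := hcbound e
      rw [abs_le] at habs
      apply interval_mem hA (α := -(ε e)) (β := 1)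
      · have : m e ≤ ε e := min_le_left _ _
        linarith [habs.1]
      · have : m e ≤ 1 := min_le_right _ _
        linarith [habs.2]
      · have : x - y e = -(1 : ℝ) • (e : E) := by
          rw [← hyx e]; simp
        have h := hεmem e
        rw [this] at h
        simpa [smul_smul] using h
      · have : x + (1 : ℝ) • (e : E) = y e := by
          rw [← hyx e]; simp
        rw [this]; exact hyA e
    -- convex combination
    have hne : n ≠ 0 := ne_of_gt hnpos
    have hz' : ∑ e : b, (1 / n) • (x + (n * c e) • (e : E)) = z := by
      rw [Finset.sum_congr rfl (fun e _ => smul_add (1/n) x ((n * c e) • (e : E)))]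
      rw [Finset.sum_add_distrib, Finset.sum_const, Finset.card_univ]
      have h1 : (Fintype.card b) • ((1 / n) • x) = x := by
        rw [← Nat.cast_smul_eq_nsmul ℝ, smul_smul, ← hn, mul_one_div, div_self hne, one_smul]
      have h2 : ∀ e : b, (1 / n) • ((n * c e) • (e : E)) = c e • (e : E) := fun e => by
        rw [smul_smul]; congr 1; field_simp
      rw [h1, Finset.sum_congr rfl (fun e _ => h2 e), hrepr]
      abel
    rw [← hz']
    apply hA.sum_mem
    · intro e _; positivity
    · rw [Finset.sum_const, Finset.card_univ, nsmul_eq_mul, ← hn, mul_one_div, div_self hne]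
    · intro e _; exact hpt e


end Helpers

theorem relint_convexHull_meets_relint_minimalFace'
    {E : Type*} [NormedAddCommGroup E] [InnerProductSpace ℝ E] [FiniteDimensional ℝ E]
    (C S : Set E) (hCclosed : IsClosed C) (hCconv : Convex ℝ C)
    (hS : S.Nonempty) (hSC : S ⊆ C) :
    (intrinsicInterior ℝ (convexHull ℝ S) ∩ intrinsicInterior ℝ (MinimalFace S C)).Nonempty := by
  classical
  set Sc := convexHull ℝ S with hSc
  have hScconv : Convex ℝ Sc := convex_convexHull ℝ S
  have hScC : Sc ⊆ C := convexHull_min hSC hCconv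
  obtain ⟨x, hx⟩ := (hS.convexHull).intrinsicInterior hScconv
  have hxSc : x ∈ Sc := intrinsicInterior_subset hx
  have hxC : x ∈ C := hScC hxSc
  set D : Set E := {y | y ∈ C ∧ ∃ ε : ℝ, 0 < ε ∧ x + ε • (x - y) ∈ C} with hD
  have hxD : x ∈ D := ⟨hxC, 1, one_pos, by simpa using hxC⟩
  have hDC : D ⊆ C := fun y hy => hy.1
  -- D is convex
  have hDconv : Convex ℝ D := by
    rintro y₁ ⟨hy₁C, ε₁, hε₁, h₁⟩ y₂ ⟨hy₂C, ε₂, hε₂, h₂⟩ a b ha hb hab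
    refine ⟨hCconv hy₁C hy₂C ha hb hab, min ε₁ ε₂, lt_min hε₁ hε₂, ?_⟩
    have k₁ : x + (min ε₁ ε₂) • (x - y₁) ∈ C := by
      refine interval_mem hCconv (α := 0) (β := ε₁) (le_of_lt (lt_min hε₁ hε₂))
        (min_le_left _ _) (by simpa using hxC) h₁
    have k₂ : x + (min ε₁ ε₂) • (x - y₂) ∈ C := by
      refine interval_mem hCconv (α := 0) (β := ε₂) (le_of_lt (lt_min hε₁ hε₂))
        (min_le_right _ _) (by simpa using hxC) h₂
    have key : a • (x + (min ε₁ ε₂) • (x - y₁)) + b • (x + (min ε₁ ε₂) • (x - y₂))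
        = (a + b) • (x + (min ε₁ ε₂) • x) - (min ε₁ ε₂) • (a • y₁ + b • y₂) := by
      module
    have := hCconv k₁ k₂ ha hb hab
    rw [key, hab, one_smul] at this
    convert this using 1
    module
  -- extremeness of D: if p ∈ D lies in the open segment (u, v) of points of C, then u ∈ D
  have hDext : ∀ p ∈ D, ∀ u ∈ C, ∀ v ∈ C, ∀ a b : ℝ, 0 < a → 0 < b → a + b = 1 →
      a • u + b • v = p → u ∈ D := by
    rintro p ⟨hpC, ε, hε, hpε⟩ u hu v hv a b ha hb hab hp
    have hb' : b = 1 - a := by linarith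
    subst hb'
    have h1εb : (0:ℝ) < 1 + ε * (1 - a) := by nlinarith
    have hne : (1:ℝ) + ε * (1 - a) ≠ 0 := ne_of_gt h1εb
    have hmemC : (1/(1 + ε * (1-a))) • (x + ε • (x - p)) + (1 - 1/(1 + ε * (1-a))) • v ∈ C := by
      apply hCconv hpε hv
      · positivity
      · rw [sub_nonneg, div_le_one h1εb]; nlinarith
      · ring
    refine ⟨hu, (1/(1 + ε * (1-a))) * ε * a, by positivity, ?_⟩
    have hident : x + ((1/(1 + ε * (1-a))) * ε * a) • (x - u)
        = (1/(1 + ε * (1-a))) • (x + ε • (x - p)) + (1 - 1/(1 + ε * (1-a))) • v := by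
      rw [← hp]
      match_scalars <;> field_simp <;> ring
    rw [hident]
    exact hmemC
  -- S ⊆ D
  have hSD : S ⊆ D := by
    intro s hs
    obtain ⟨ε, hε, hmem⟩ := exists_extend_mem hx (subset_affineSpan ℝ Sc (subset_convexHull ℝ S hs))
    exact ⟨hSC hs, ε, hε, hScC hmem⟩
  -- intrinsic core property of D at x
  have hcore : ∀ y ∈ D, ∃ ε : ℝ, 0 < ε ∧ x + ε • (x - y) ∈ D := by
    rintro y ⟨hyC, ε, hε, hyε⟩
    refine ⟨ε, hε, hyε, ε⁻¹, by positivity, ?_⟩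
    have : x + ε⁻¹ • (x - (x + ε • (x - y))) = y := by
      have hne : ε ≠ 0 := ne_of_gt hε
      match_scalars <;> field_simp <;> ring
    rw [this]
    exact hyC
  have hxD' : x ∈ intrinsicInterior ℝ D := mem_intrinsicInterior_of_core hDconv hxD hcore
  -- G := C ∩ affineSpan D is a face of C containing S
  set G : Set E := C ∩ (affineSpan ℝ D : Set E) with hG
  have hGface : IsFaceOf G C := by
    refine ⟨Set.inter_subset_left, hCconv.inter (AffineSubspace.convex _),
      hCclosed.inter (affineSpan ℝ D).closed_of_finiteDimensional, ?_⟩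
    rintro p ⟨hpC, hpspan⟩ u hu v hv ⟨a, b, ha, hb, hab, hp⟩
    obtain ⟨ε, hε, hzD⟩ := exists_extend_mem hxD' hpspan
    set z : E := x + ε • (x - p) with hz
    have hzC : z ∈ C := hDC hzD
    have hεb1 : (0:ℝ) < ε * b + 1 := by positivity
    have h1ε : (0:ℝ) < 1 + ε := by positivity
    set w : E := (ε * b / (ε * b + 1)) • v + (1 / (ε * b + 1)) • z with hw
    have hwC : w ∈ C := by
      apply hCconv hv hzC
      · positivity
      · positivity
      · field_simp
    have hident : (ε * a / (1 + ε)) • u + ((ε * b + 1) / (1 + ε)) • w = x := by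
      rw [hw, hz, ← hp]
      have hne1 : (1:ℝ) + ε ≠ 0 := ne_of_gt h1ε
      have hne2 : ε * b + 1 ≠ 0 := ne_of_gt hεb1
      have hab' : b = 1 - a := by linarith
      subst hab'
      match_scalars <;> field_simp <;> ring
    have hcoef1 : (0:ℝ) < ε * a / (1 + ε) := by positivity
    have hcoef2 : (0:ℝ) < (ε * b + 1) / (1 + ε) := by positivity
    have hcsum : ε * a / (1 + ε) + (ε * b + 1) / (1 + ε) = 1 := by
      field_simp
      linear_combination ε * hab
    have huD : u ∈ D := hDext x hxD u hu w hwC _ _ hcoef1 hcoef2 hcsum hident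
    have hwD : w ∈ D := by
      refine hDext x hxD w hwC u hu _ _ hcoef2 hcoef1 (by linarith) ?_
      rw [← hident]; exact add_comm _ _
    have hvD : v ∈ D := by
      refine hDext w hwD v hv z hzC _ _ ?_ ?_ ?_ hw.symm
      · positivity
      · positivity
      · field_simp
    exact ⟨⟨hu, subset_affineSpan ℝ D huD⟩, ⟨hv, subset_affineSpan ℝ D hvD⟩⟩
  -- comparison with the minimal face
  have hMG : MinimalFace S C ⊆ G :=
    Set.sInter_subset_of_mem ⟨hGface, fun s hs => ⟨hSC hs, subset_affineSpan ℝ D (hSD hs)⟩⟩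
  have hDM : D ⊆ MinimalFace S C := by
    intro yd hyd
    rw [MinimalFace, Set.mem_sInter]
    rintro F ⟨⟨hFC, hFconv, hFclosed, hFext⟩, hSF⟩
    have hxF : x ∈ F := convexHull_min hSF hFconv hxSc
    obtain ⟨hyC, ε, hε, hyε⟩ := hyd
    have h1ε : (0:ℝ) < 1 + ε := by positivity
    have hseg : x ∈ openSegment ℝ yd (x + ε • (x - yd)) := by
      refine ⟨ε / (1 + ε), 1 / (1 + ε), by positivity, by positivity, by field_simp; ring, ?_⟩
      have hne : (1:ℝ) + ε ≠ 0 := ne_of_gt h1ε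
      match_scalars <;> field_simp <;> ring
    exact (hFext x hxF yd hyC _ hyε hseg).1
  have hxMmem : x ∈ MinimalFace S C := hDM hxD
  -- affine spans agree
  have hspan : affineSpan ℝ (MinimalFace S C) = affineSpan ℝ D := by
    apply le_antisymm
    · apply affineSpan_le.2
      intro y hy
      exact (hMG hy).2
    · exact affineSpan_mono ℝ hDM
  have hxM : x ∈ intrinsicInterior ℝ (MinimalFace S C) := by
    rw [mem_intrinsicInterior_iff_ball] at hxD' ⊢
    obtain ⟨hxDm, δ, hδ, hball⟩ := hxD'
    refine ⟨hxMmem, δ, hδ, fun z hz hdist => ?_⟩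
    rw [hspan] at hz
    exact hDM (hball z hz hdist)
  exact ⟨x, hx, hxM⟩


/-- **Proposition.** For a closed convex set `C` and a nonempty `S ⊆ C`, the relative
interiors of `conv S` and of the minimal face of `C` containing `S` intersect. -/
theorem relint_convexHull_meets_relint_minimalFace
    {E : Type*} [NormedAddCommGroup E] [InnerProductSpace ℝ E] [FiniteDimensional ℝ E]
    (C S : Set E) (hCclosed : IsClosed C) (hCconv : Convex ℝ C)
    (hS : S.Nonempty) (hSC : S ⊆ C) :
    (intrinsicInterior ℝ (convexHull ℝ S) ∩ intrinsicInterior ℝ (MinimalFace S C)).Nonempty :=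
  relint_convexHull_meets_relint_minimalFace' C S hCclosed hCconv hS hSC
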